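/- arXiv:math/9803085 — 5 statements merged into one kernel-verified Lean document; each statement's English description precedes it below -/
import Mathlib

section
/- Let R be a graded F-algebra and d > 0. Every morphism of deformations of R, i.e. every morphism over the identity of R between two d-dimensional deformations (R̃1, t1, j1) and (R̃2, t2, j2) of R, is bijective, and hence is an isomorphism of deformations of R. -/
/-- A finite-dimensional graded-commutative ℤ-graded `F`-algebra
("graded F-algebra" in the sense of Seidel's paper). -/
structure GradedFAlg (F : Type) [Field F] where
  carrier : Type
  [ring : Ring carrier]
  [alg : Algebra F carrier]
  grading : ℤ → Submodule F carrier
  [gradedAlgebra : GradedAlgebra grading]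
  [findim : FiniteDimensional F carrier]
  gcomm : ∀ (i j : ℤ) (x y : carrier), x ∈ grading i → y ∈ grading j →
    x * y = ((-1 : F) ^ (i * j)) • (y * x)

attribute [instance] GradedFAlg.ring GradedFAlg.alg GradedFAlg.gradedAlgebra GradedFAlg.findim

variable {F : Type} [Field F]

/-- A homomorphism of graded `F`-algebras. -/
structure GradedFAlg.Hom (A B : GradedFAlg F) where
  toAlgHom : A.carrier →ₐ[F] B.carrier
  graded : ∀ (i : ℤ) (x : A.carrier), x ∈ A.grading i → toAlgHom x ∈ B.grading i

/-- The identity homomorphism of graded `F`-algebras. -/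
def GradedFAlg.Hom.id (A : GradedFAlg F) : GradedFAlg.Hom A A :=
  ⟨AlgHom.id F A.carrier, fun _ _ h => h⟩

/-- A `d`-dimensional (first order infinitesimal) deformation `(R̃, t, j)` of `A`:
`t ∈ R̃^d` with `t² = 0` whose annihilator is exactly `t·R̃`, and `j : R̃ → A`
a surjective homomorphism of graded algebras with kernel `t·R̃`. -/
structure Deformation (F : Type) [Field F] (A : GradedFAlg F) (d : ℤ) where
  alg : GradedFAlg F
  t : alg.carrier
  t_mem : t ∈ alg.grading d
  t_sq : t * t = 0
  t_ann : ∀ x : alg.carrier, t * x = 0 ↔ ∃ y : alg.carrier, x = t * y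
  j : GradedFAlg.Hom alg A
  j_surj : Function.Surjective j.toAlgHom
  j_ker : ∀ x : alg.carrier, j.toAlgHom x = 0 ↔ ∃ y : alg.carrier, x = t * y

/-- A morphism of deformations over a homomorphism `f` of graded `F`-algebras. -/
structure DefMorphismOver {A B : GradedFAlg F} (f : GradedFAlg.Hom A B) {d : ℤ}
    (D1 : Deformation F A d) (D2 : Deformation F B d) where
  toHom : GradedFAlg.Hom D1.alg D2.alg
  map_t : toHom.toAlgHom D1.t = D2.t
  over' : ∀ x, D2.j.toAlgHom (toHom.toAlgHom x) = f.toAlgHom (D1.j.toAlgHom x)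

/-- Two deformations of `A` are isomorphic if there is a bijective morphism of
deformations (i.e. a morphism over the identity of `A`) between them. -/
def Deformation.Iso {A : GradedFAlg F} {d : ℤ} (D1 D2 : Deformation F A d) : Prop :=
  ∃ φ : DefMorphismOver (GradedFAlg.Hom.id A) D1 D2, Function.Bijective φ.toHom.toAlgHom

lemma deformation_finrank {F : Type} [Field F] (R : GradedFAlg F) (d : ℤ)
    (D : Deformation F R d) :
    Module.finrank F D.alg.carrier = 2 * Module.finrank F R.carrier := by
  set L : D.alg.carrier →ₗ[F] D.alg.carrier := LinearMap.mulLeft F D.t with hL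
  have hkr : LinearMap.ker L = LinearMap.range L := by
    ext x
    simp only [LinearMap.mem_ker, LinearMap.mem_range, hL, LinearMap.mulLeft_apply]
    rw [D.t_ann x]
    constructor
    · rintro ⟨y, rfl⟩; exact ⟨y, rfl⟩
    · rintro ⟨y, rfl⟩; exact ⟨y, rfl⟩
  set J : D.alg.carrier →ₗ[F] R.carrier := D.j.toAlgHom.toLinearMap with hJ
  have hkerJ : LinearMap.ker J = LinearMap.range L := by
    ext x
    simp only [LinearMap.mem_ker, LinearMap.mem_range, hL, LinearMap.mulLeft_apply, hJ,
      AlgHom.toLinearMap_apply]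
    rw [D.j_ker x]
    constructor
    · rintro ⟨y, rfl⟩; exact ⟨y, rfl⟩
    · rintro ⟨y, rfl⟩; exact ⟨y, rfl⟩
  have h1 := LinearMap.finrank_range_add_finrank_ker L
  have h2 := LinearMap.finrank_range_add_finrank_ker J
  have hJsurj : LinearMap.range J = ⊤ := LinearMap.range_eq_top.mpr D.j_surj
  rw [hJsurj, finrank_top] at h2
  rw [hkerJ] at h2
  rw [hkr] at h1
  omega

/-- Every morphism of deformations of a graded `F`-algebra `R`
(i.e. every morphism over the identity of `R` between two `d`-dimensional
deformations of `R`) is bijective, hence an isomorphism of deformations. -/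
theorem every_morphism_of_deformations_is_iso
    {F : Type} [Field F] (R : GradedFAlg F) (d : ℤ) (hd : 0 < d)
    (D1 D2 : Deformation F R d) (φ : DefMorphismOver (GradedFAlg.Hom.id R) D1 D2) :
    Function.Bijective φ.toHom.toAlgHom := by
  have hinj : Function.Injective φ.toHom.toAlgHom := by
    rw [injective_iff_map_eq_zero]
    intro x hx
    have hover := φ.over' x
    rw [hx, map_zero] at hover
    have hj1x : D1.j.toAlgHom x = 0 := by
      simpa [GradedFAlg.Hom.id] using hover.symm
    obtain ⟨y, rfl⟩ := (D1.j_ker x).mp hj1x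
    have hy : D2.t * φ.toHom.toAlgHom y = 0 := by
      rw [← φ.map_t, ← map_mul, hx]
    obtain ⟨w, hw⟩ := (D2.t_ann _).mp hy
    have hj2 : D2.j.toAlgHom (φ.toHom.toAlgHom y) = 0 := by
      rw [(D2.j_ker _)]; exact ⟨w, hw⟩
    have hj1y : D1.j.toAlgHom y = 0 := by
      have := φ.over' y
      rw [hj2] at this
      simpa [GradedFAlg.Hom.id] using this.symm
    obtain ⟨z, rfl⟩ := (D1.j_ker y).mp hj1y
    rw [← mul_assoc, D1.t_sq, zero_mul]
  have hdim : Module.finrank F D1.alg.carrier = Module.finrank F D2.alg.carrier := by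
    rw [deformation_finrank R d D1, deformation_finrank R d D2]
  have hsurj : Function.Surjective φ.toHom.toAlgHom := by
    have := (LinearMap.injective_iff_surjective_of_finrank_eq_finrank hdim).mp
      (show Function.Injective φ.toHom.toAlgHom.toLinearMap from hinj)
    exact this
  exact ⟨hinj, hsurj⟩
end

section
/- Let R be a graded F-algebra concentrated in even degrees (R^i = 0 for all odd i) and let d > 0 be odd. Then every d-dimensional deformation of R is isomorphic, as a deformation of R, to the trivial deformation (R̃_0, ε, j) obtained from ψ = 0 (so R̃_0 = R[ε]/ε² with the untwisted product). In other words, Def_d(R) = 0 for odd d. -/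
variable {F : Type} [Field F]

/-- `ψ ∈ Z_d(R)`: an `F`-bilinear map `R × R → R` of degree `-d`, graded
symmetric, satisfying the cocycle identity
`(-1)^{d·deg x}·x·ψ(y,z) - ψ(xy,z) + ψ(x,yz) - ψ(x,y)·z = 0`. -/
structure IsCocycle (R : GradedFAlg F) (d : ℤ)
    (ψ : R.carrier →ₗ[F] R.carrier →ₗ[F] R.carrier) : Prop where
  deg : ∀ (i j : ℤ) (x y : R.carrier), x ∈ R.grading i → y ∈ R.grading j →
    ψ x y ∈ R.grading (i + j - d)
  symm : ∀ (i j : ℤ) (x y : R.carrier), x ∈ R.grading i → y ∈ R.grading j →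
    ψ x y = ((-1 : F) ^ (i * j)) • ψ y x
  cocycle : ∀ (i : ℤ) (x y z : R.carrier), x ∈ R.grading i →
    ((-1 : F) ^ (d * i)) • (x * ψ y z) - ψ (x * y) z + ψ x (y * z) - ψ x y * z = 0

/-- The deformation `D` "is" the twisted algebra `R̃_ψ = R ⊕ R·ε`:
there is an `F`-linear identification `e` of `D.alg` with `R × R` under which
multiplication becomes the twisted product
`(x₀ + x₁ε)(y₀ + y₁ε) = x₀y₀ + ((-1)^{d·deg x₀} x₀y₁ + x₁y₀ + ψ(x₀,y₀))ε`
(the sign operator `σ` being `σ x = (-1)^{d·deg x}·x` on homogeneous elements),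
`t` becomes `ε`, `j` becomes the projection to the first factor, and the grading
of `D.alg` is the evident grading of `R ⊕ R·ε` with `deg ε = d`. -/
def IsTwistedModel (R : GradedFAlg F) (d : ℤ) (σ : R.carrier →ₗ[F] R.carrier)
    (ψ : R.carrier →ₗ[F] R.carrier →ₗ[F] R.carrier) (D : Deformation F R d) : Prop :=
  ∃ e : D.alg.carrier ≃ₗ[F] R.carrier × R.carrier,
    (∀ x y : D.alg.carrier, e (x * y) =
      ((e x).1 * (e y).1, σ (e x).1 * (e y).2 + (e x).2 * (e y).1 + ψ (e x).1 (e y).1)) ∧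
    e 1 = (1, 0) ∧
    e D.t = (0, 1) ∧
    (∀ x, D.j.toAlgHom x = (e x).1) ∧
    (∀ (i : ℤ) (x : D.alg.carrier), x ∈ D.alg.grading i ↔
      (e x).1 ∈ R.grading i ∧ (e x).2 ∈ R.grading (i - d))

section Auxiliary

variable {F : Type} [Field F]

/-- A graded linear map (of degree `d₀`) commutes with taking homogeneous components. -/
lemma GradedFAlg.decompose_map (A B : GradedFAlg F)
    (g : A.carrier →ₗ[F] B.carrier) (d₀ : ℤ)
    (hg : ∀ (k : ℤ) (x : A.carrier), x ∈ A.grading k → g x ∈ B.grading (d₀ + k))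
    (x : A.carrier) (i : ℤ) :
    (DirectSum.decompose B.grading (g x) (d₀ + i) : B.carrier)
      = g (DirectSum.decompose A.grading x i) := by
  classical
  let π : B.carrier →ₗ[F] B.carrier :=
    (B.grading (d₀ + i)).subtype ∘ₗ (DirectSum.component F ℤ (fun k => B.grading k) (d₀ + i)) ∘ₗ
      (DirectSum.decomposeLinearEquiv B.grading).toLinearMap
  have hπ : ∀ y : B.carrier, π y = (DirectSum.decompose B.grading y (d₀ + i) : B.carrier) :=
    fun y => rfl
  rw [← hπ]
  conv_lhs => rw [← DirectSum.sum_support_decompose A.grading x]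
  rw [map_sum, map_sum]
  have hterm : ∀ k : ℤ, π (g (DirectSum.decompose A.grading x k : A.carrier))
      = if k = i then g (DirectSum.decompose A.grading x k : A.carrier) else 0 := by
    intro k
    rw [hπ]
    by_cases h : k = i
    · subst h
      rw [if_pos rfl]
      exact DirectSum.decompose_of_mem_same B.grading (hg k _ (SetLike.coe_mem _))
    · rw [if_neg h]
      exact DirectSum.decompose_of_mem_ne B.grading (hg k _ (SetLike.coe_mem _)) (by omega)
  rw [Finset.sum_congr rfl fun k _ => hterm k, Finset.sum_ite_eq']
  by_cases hi : i ∈ (DirectSum.decompose A.grading x).support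
  · rw [if_pos hi]
  · rw [if_neg hi]
    have h0 : (DirectSum.decompose A.grading x) i = 0 := DFinsupp.notMem_support_iff.mp hi
    rw [h0]
    simp

/-- If `g` is an injective graded linear map of degree `d₀` and `g b` is homogeneous of
degree `m`, then `b` is homogeneous of degree `m - d₀`. -/
lemma GradedFAlg.mem_of_graded_inj (A B : GradedFAlg F)
    (g : A.carrier →ₗ[F] B.carrier) (d₀ : ℤ)
    (hg : ∀ (k : ℤ) (x : A.carrier), x ∈ A.grading k → g x ∈ B.grading (d₀ + k))
    (hinj : Function.Injective g) {m : ℤ} {b : A.carrier}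
    (hb : g b ∈ B.grading m) : b ∈ A.grading (m - d₀) := by
  classical
  have hzero : ∀ k : ℤ, k ≠ m - d₀ → (DirectSum.decompose A.grading b k : A.carrier) = 0 := by
    intro k hk
    have h1 := GradedFAlg.decompose_map A B g d₀ hg b k
    have h2 : (DirectSum.decompose B.grading (g b) (d₀ + k) : B.carrier) = 0 :=
      DirectSum.decompose_of_mem_ne B.grading hb (by omega)
    have h3 : g ((DirectSum.decompose A.grading b k : A.carrier)) = g 0 := by
      rw [← h1, h2, map_zero]
    exact hinj h3
  rw [← DirectSum.sum_support_decompose A.grading b]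
  refine Submodule.sum_mem _ fun k _ => ?_
  by_cases h : k = m - d₀
  · subst h; exact SetLike.coe_mem _
  · rw [hzero k h]; exact Submodule.zero_mem _

end Auxiliary

/-- If `R` is a graded `F`-algebra concentrated in even degrees
and `d > 0` is odd, then every `d`-dimensional deformation of `R` is isomorphic,
as a deformation of `R`, to the trivial deformation `(R̃_0, ε, j)` (i.e.
`R[ε]/ε²` with the untwisted product, which is `R̃_ψ` for `ψ = 0`).
In other words `Def_d(R) = 0` for odd `d`. -/
theorem odd_dimensional_deformations_trivial
    {F : Type} [Field F] (R : GradedFAlg F)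
    (heven : ∀ i : ℤ, Odd i → R.grading i = ⊥)
    (d : ℤ) (hd : 0 < d) (hodd : Odd d)
    (σ : R.carrier →ₗ[F] R.carrier)
    (hσ : ∀ (i : ℤ) (x : R.carrier), x ∈ R.grading i → σ x = ((-1 : F) ^ (d * i)) • x)
    (D : Deformation F R d) :
    IsTwistedModel R d σ (0 : R.carrier →ₗ[F] R.carrier →ₗ[F] R.carrier) D := by
  classical
  -- a homogeneous linear section of `j`
  have hsec : ∀ i : ℤ, ∃ g : R.grading i →ₗ[F] D.alg.grading i,
      ∀ y : R.grading i, D.j.toAlgHom (g y : D.alg.carrier) = (y : R.carrier) := by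
    intro i
    let f : D.alg.grading i →ₗ[F] R.grading i :=
      (D.j.toAlgHom.toLinearMap ∘ₗ (D.alg.grading i).subtype).codRestrict (R.grading i)
        (fun x => D.j.graded i x x.2)
    have hfsurj : LinearMap.range f = ⊤ := by
      rw [LinearMap.range_eq_top]
      rintro ⟨y, hy⟩
      obtain ⟨x, hx⟩ := D.j_surj y
      refine ⟨⟨(DirectSum.decompose D.alg.grading x i : D.alg.carrier), SetLike.coe_mem _⟩, ?_⟩
      apply Subtype.ext
      show D.j.toAlgHom.toLinearMap (DirectSum.decompose D.alg.grading x i : D.alg.carrier) = y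
      have hdm := GradedFAlg.decompose_map D.alg R D.j.toAlgHom.toLinearMap 0
        (fun k z hz => by simpa using D.j.graded k z hz) x i
      have h0i : (0 : ℤ) + i = i := by ring
      rw [h0i] at hdm
      have : D.j.toAlgHom.toLinearMap x = y := hx
      rw [← hdm, this, DirectSum.decompose_of_mem_same R.grading hy]
    obtain ⟨g, hgf⟩ := f.exists_rightInverse_of_surjective hfsurj
    refine ⟨g, fun y => ?_⟩
    have := LinearMap.ext_iff.mp hgf y
    exact congrArg Subtype.val this
  choose g hg using hsec
  let S : R.carrier →ₗ[F] D.alg.carrier :=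
    (DirectSum.toModule F ℤ D.alg.carrier fun i => (D.alg.grading i).subtype ∘ₗ g i) ∘ₗ
      (DirectSum.decomposeLinearEquiv R.grading).toLinearMap
  have hS_hom : ∀ (i : ℤ) (x : R.carrier) (hx : x ∈ R.grading i),
      S x = (g i ⟨x, hx⟩ : D.alg.carrier) := by
    intro i x hx
    show DirectSum.toModule F ℤ D.alg.carrier (fun i => (D.alg.grading i).subtype ∘ₗ g i)
      (DirectSum.decompose R.grading x) = _
    rw [DirectSum.decompose_of_mem R.grading hx, ← DirectSum.lof_eq_of F, DirectSum.toModule_lof]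
    rfl
  have hS_mem : ∀ (i : ℤ) (x : R.carrier), x ∈ R.grading i → S x ∈ D.alg.grading i := by
    intro i x hx; rw [hS_hom i x hx]; exact SetLike.coe_mem _
  have hS_sect : ∀ x, D.j.toAlgHom (S x) = x := by
    intro x
    conv_rhs => rw [← DirectSum.sum_support_decompose R.grading x]
    conv_lhs => rw [← DirectSum.sum_support_decompose R.grading x]
    rw [map_sum, map_sum]
    refine Finset.sum_congr rfl fun k _ => ?_
    rw [hS_hom k _ (SetLike.coe_mem _)]
    exact hg k _
  -- basic consequences
  have hjt : ∀ z, D.j.toAlgHom (D.t * z) = 0 := fun z => (D.j_ker _).mpr ⟨z, rfl⟩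
  have htw : ∀ w, D.t * w = D.t * S (D.j.toAlgHom w) := by
    intro w
    have h0 : D.j.toAlgHom (w - S (D.j.toAlgHom w)) = 0 := by
      rw [map_sub, hS_sect, sub_self]
    obtain ⟨w', hw'⟩ := (D.j_ker _).mp h0
    have h1 : D.t * (w - S (D.j.toAlgHom w)) = 0 := by
      rw [hw', ← mul_assoc, D.t_sq, zero_mul]
    rw [mul_sub, sub_eq_zero] at h1
    exact h1
  have htS0 : ∀ b : R.carrier, D.t * S b = 0 → b = 0 := by
    intro b hb
    obtain ⟨y, hy⟩ := (D.t_ann (S b)).mp hb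
    have h1 : D.j.toAlgHom (S b) = 0 := by rw [hy]; exact hjt y
    rw [hS_sect] at h1; exact h1
  have htS_mem : ∀ (k : ℤ) (x : R.carrier), x ∈ R.grading k →
      (LinearMap.mulLeft F D.t ∘ₗ S) x ∈ D.alg.grading (d + k) := fun k x hx =>
    SetLike.mul_mem_graded D.t_mem (hS_mem k x hx)
  have htS_inj : Function.Injective (LinearMap.mulLeft F D.t ∘ₗ S) := by
    have hker : LinearMap.ker (LinearMap.mulLeft F D.t ∘ₗ S) = ⊥ := by
      ext b
      simp only [LinearMap.mem_ker, Submodule.mem_bot]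
      constructor
      · intro h; exact htS0 b h
      · rintro rfl; rw [map_zero]
    exact LinearMap.ker_eq_bot.mp hker
  have hker : ∀ (m : ℤ) (v : D.alg.carrier), v ∈ D.alg.grading m → D.j.toAlgHom v = 0 →
      ∃ b : R.carrier, b ∈ R.grading (m - d) ∧ v = D.t * S b := by
    intro m v hv hjv
    obtain ⟨w, hw⟩ := (D.j_ker v).mp hjv
    rw [htw w] at hw
    refine ⟨D.j.toAlgHom w, ?_, hw⟩
    have hmem : (LinearMap.mulLeft F D.t ∘ₗ S) (D.j.toAlgHom w) ∈ D.alg.grading m := by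
      show D.t * S _ ∈ _
      rw [← hw]; exact hv
    exact GradedFAlg.mem_of_graded_inj R D.alg _ d htS_mem htS_inj hmem
  have hR0 : ∀ (i : ℤ) (x : R.carrier), Odd i → x ∈ R.grading i → x = 0 := by
    intro i x hi hx
    rw [heven i hi, Submodule.mem_bot] at hx; exact hx
  have hker0 : ∀ (m : ℤ) (v : D.alg.carrier), Even m → v ∈ D.alg.grading m →
      D.j.toAlgHom v = 0 → v = 0 := by
    intro m v hm hv hjv
    obtain ⟨b, hb, rfl⟩ := hker m v hv hjv
    have hmd : Odd (m - d) := by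
      have h1 := Int.even_iff.mp hm
      have h2 := Int.odd_iff.mp hodd
      exact Int.odd_iff.mpr (by omega)
    rw [hR0 (m - d) b hmd hb, map_zero, mul_zero]
  have hS_one : S 1 = 1 := by
    have h0 : D.j.toAlgHom (S 1 - 1) = 0 := by rw [map_sub, hS_sect, map_one, sub_self]
    have hmem : S 1 - 1 ∈ D.alg.grading 0 :=
      sub_mem (hS_mem 0 1 (SetLike.one_mem_graded R.grading))
        (SetLike.one_mem_graded D.alg.grading)
    have := hker0 0 _ Even.zero hmem h0
    rwa [sub_eq_zero] at this
  have hS_mul_hom : ∀ (i k : ℤ) (x y : R.carrier), x ∈ R.grading i → y ∈ R.grading k →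
      S (x * y) = S x * S y := by
    intro i k x y hx hy
    rcases Int.even_or_odd i with hi | hi
    swap
    · rw [hR0 i x hi hx]; simp
    rcases Int.even_or_odd k with hk | hk
    swap
    · rw [hR0 k y hk hy]; simp
    have h0 : D.j.toAlgHom (S x * S y - S (x * y)) = 0 := by
      rw [map_sub, map_mul, hS_sect, hS_sect, hS_sect, sub_self]
    have hmem : S x * S y - S (x * y) ∈ D.alg.grading (i + k) :=
      sub_mem (SetLike.mul_mem_graded (hS_mem i x hx) (hS_mem k y hy))
        (hS_mem _ _ (SetLike.mul_mem_graded hx hy))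
    have := hker0 (i + k) _ (hi.add hk) hmem h0
    rw [sub_eq_zero] at this
    exact this.symm
  have hS_mul : ∀ x y : R.carrier, S (x * y) = S x * S y := by
    intro x y
    conv_lhs => rw [← DirectSum.sum_support_decompose R.grading x,
      ← DirectSum.sum_support_decompose R.grading y]
    conv_rhs => rw [← DirectSum.sum_support_decompose R.grading x,
      ← DirectSum.sum_support_decompose R.grading y]
    rw [Finset.sum_mul_sum]
    simp only [map_sum]
    rw [Finset.sum_mul_sum]
    refine Finset.sum_congr rfl fun i _ => Finset.sum_congr rfl fun k _ => ?_
    exact hS_mul_hom i k _ _ (SetLike.coe_mem _) (SetLike.coe_mem _)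
  have hst : ∀ x : R.carrier, S x * D.t = D.t * S x := by
    intro x
    conv_lhs => rw [← DirectSum.sum_support_decompose R.grading x]
    conv_rhs => rw [← DirectSum.sum_support_decompose R.grading x]
    rw [map_sum, Finset.sum_mul, Finset.mul_sum]
    refine Finset.sum_congr rfl fun i _ => ?_
    rcases Int.even_or_odd i with hi | hi
    · have h := D.alg.gcomm i d (S (DirectSum.decompose R.grading x i : R.carrier)) D.t
        (hS_mem i _ (SetLike.coe_mem _)) D.t_mem
      rw [h, Even.neg_one_zpow (hi.mul_right d), one_smul]
    · rw [hR0 i _ hi (SetLike.coe_mem _), map_zero, zero_mul, mul_zero]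
  have hσ_id : ∀ x : R.carrier, σ x = x := by
    intro x
    conv_lhs => rw [← DirectSum.sum_support_decompose R.grading x]
    conv_rhs => rw [← DirectSum.sum_support_decompose R.grading x]
    rw [map_sum]
    refine Finset.sum_congr rfl fun i _ => ?_
    rcases Int.even_or_odd i with hi | hi
    · rw [hσ i _ (SetLike.coe_mem _), Even.neg_one_zpow (hi.mul_left d), one_smul]
    · rw [hR0 i _ hi (SetLike.coe_mem _), map_zero]
  -- the linear identification
  let E : R.carrier × R.carrier →ₗ[F] D.alg.carrier :=
    S.coprod (LinearMap.mulLeft F D.t ∘ₗ S)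
  have hE : ∀ p : R.carrier × R.carrier, E p = S p.1 + D.t * S p.2 := fun p => rfl
  have hEker : ∀ p : R.carrier × R.carrier, E p = 0 → p = 0 := by
    intro p hp
    rw [hE] at hp
    have h1 : p.1 = 0 := by
      have h := congrArg D.j.toAlgHom hp
      rwa [map_add, hS_sect, hjt, add_zero, map_zero] at h
    have h2 : p.2 = 0 := by
      apply htS0
      rw [h1, map_zero, zero_add] at hp
      exact hp
    exact Prod.ext h1 h2
  have hEinj : Function.Injective E := by
    have hkerE : LinearMap.ker E = ⊥ := by
      ext p
      simp only [LinearMap.mem_ker, Submodule.mem_bot]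
      exact ⟨fun h => hEker p h, fun h => by rw [h, map_zero]⟩
    exact LinearMap.ker_eq_bot.mp hkerE
  have hEsurj : Function.Surjective E := by
    intro v
    have h0 : D.j.toAlgHom (v - S (D.j.toAlgHom v)) = 0 := by
      rw [map_sub, hS_sect, sub_self]
    obtain ⟨w, hw⟩ := (D.j_ker _).mp h0
    refine ⟨(D.j.toAlgHom v, D.j.toAlgHom w), ?_⟩
    rw [hE]
    dsimp only
    rw [← htw w, ← hw]
    abel
  let eqv := LinearEquiv.ofBijective E ⟨hEinj, hEsurj⟩
  have heqv : ∀ p : R.carrier × R.carrier, eqv p = E p := fun p => rfl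
  have heqs : ∀ x : D.alg.carrier, E (eqv.symm x) = x := fun x => eqv.apply_symm_apply x
  have hj4 : ∀ x : D.alg.carrier, D.j.toAlgHom x = (eqv.symm x).1 := by
    intro x
    conv_lhs => rw [← heqs x]
    rw [hE, map_add, hS_sect, hjt, add_zero]
  refine ⟨eqv.symm, ?_, ?_, ?_, hj4, ?_⟩
  · -- multiplicativity
    intro x y
    rw [LinearEquiv.symm_apply_eq, heqv]
    have hx : x = E (eqv.symm x) := (heqs x).symm
    have hy : y = E (eqv.symm y) := (heqs y).symm
    set p := eqv.symm x with hp
    set q := eqv.symm y with hq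
    have hcomm' : ∀ a b : R.carrier, S a * (D.t * S b) = D.t * S (a * b) := by
      intro a b
      rw [← mul_assoc, hst a, mul_assoc, ← hS_mul]
    rw [hx, hy, hE p, hE q, hE]
    simp only [LinearMap.zero_apply, add_zero, hσ_id]
    rw [add_mul, mul_add, mul_add]
    rw [← hS_mul p.1 q.1, hcomm' p.1 q.2]
    rw [mul_assoc D.t (S p.2) (S q.1), ← hS_mul p.2 q.1]
    have hT4 : D.t * S p.2 * (D.t * S q.2) = 0 := by
      rw [mul_assoc D.t (S p.2) (D.t * S q.2), hcomm' p.2 q.2, ← mul_assoc, D.t_sq, zero_mul]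
    rw [hT4]
    rw [map_add, mul_add]
    abel
  · -- unit
    rw [LinearEquiv.symm_apply_eq, heqv, hE]
    dsimp only
    rw [hS_one, map_zero, mul_zero, add_zero]
  · -- t
    rw [LinearEquiv.symm_apply_eq, heqv, hE]
    dsimp only
    rw [hS_one, map_zero, mul_one, zero_add]
  · -- grading
    intro i x
    constructor
    · intro hxi
      obtain ⟨p, hpx⟩ : ∃ p : R.carrier × R.carrier, eqv.symm x = p := ⟨_, rfl⟩
      rw [hpx]
      have hEx : S p.1 + D.t * S p.2 = x := by rw [← hE, ← hpx]; exact heqs x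
      have h1 : p.1 ∈ R.grading i := by
        rw [← hpx, ← hj4 x]; exact D.j.graded i x hxi
      have h2' : D.t * S p.2 = x - S p.1 := by rw [← hEx]; abel
      have h2 : (LinearMap.mulLeft F D.t ∘ₗ S) p.2 ∈ D.alg.grading i := by
        show D.t * S p.2 ∈ D.alg.grading i
        rw [h2']
        exact sub_mem hxi (hS_mem i _ h1)
      exact ⟨h1, GradedFAlg.mem_of_graded_inj R D.alg _ d htS_mem htS_inj h2⟩
    · rintro ⟨h1, h2⟩
      have hxE : x = E (eqv.symm x) := (heqs x).symm
      rw [hxE, hE]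
      refine add_mem (hS_mem i _ h1) ?_
      have hm := SetLike.mul_mem_graded D.t_mem (hS_mem (i - d) _ h2)
      rwa [show d + (i - d) = i from by ring] at hm
end

section
/- Let n ≥ 1 and let d be an even integer with 2 ≤ d ≤ 2n+2. Every d-dimensional deformation of R = F[u]/(u^{n+1}) is isomorphic, as a deformation of R, to (R̃_α, t, j) for some α ∈ F. -/
variable {F : Type} [Field F]

/-- `R` is (a model of) the cohomology `F[u]/(u^{n+1})` of `ℂPⁿ`: `u` has
degree `2`, `u^{n+1} = 0`, and `1, u, …, uⁿ` is an `F`-basis of `R`. -/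
structure IsCPnAlg (R : GradedFAlg F) (u : R.carrier) (n : ℕ) : Prop where
  u_mem : u ∈ R.grading 2
  u_pow : u ^ (n + 1) = 0
  basis : ∃ b : Module.Basis (Fin (n + 1)) F R.carrier, ∀ i : Fin (n + 1), b i = u ^ (i : ℕ)

/-- The deformation `D` of `R = F[u]/(u^{n+1})` "is" the deformation
`R̃_α = F[ũ, t]/(ũ^{n+1} + α·t·ũ^{n+1-d/2}, t²)` with `j(ũ) = u`, `j(t) = 0`:
it contains an element `ũ` of degree `2` lifting `u` and satisfying the defining
relation. (These data determine `R̃_α` up to isomorphism of deformations.) -/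
structure IsRAlphaDef (R : GradedFAlg F) (u : R.carrier) (n : ℕ) (d : ℤ) (α : F)
    (D : Deformation F R d) (ut : D.alg.carrier) : Prop where
  mem : ut ∈ D.alg.grading 2
  j_u : D.j.toAlgHom ut = u
  rel : ut ^ (n + 1) + α • (D.t * ut ^ ((n : ℤ) + 1 - d / 2).toNat) = 0

/-- Auxiliary: the degree-`m` component of a sum of homogeneous pieces with pairwise
distinct degrees, one of which has degree `m`. -/
lemma GradedFAlg.proj_sum {F : Type} [Field F] (A : GradedFAlg F) (m : ℤ)
    {ι : Type} [DecidableEq ι] (s : Finset ι) (f : ι → ℤ) (g : ι → A.carrier)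
    (hg : ∀ i ∈ s, g i ∈ A.grading (f i))
    (hinj : ∀ i ∈ s, ∀ i' ∈ s, f i = f i' → i = i')
    (i₀ : ι) (hi₀ : i₀ ∈ s) (hf : f i₀ = m) :
    ((DirectSum.decompose A.grading (∑ i ∈ s, g i) m : A.grading m) : A.carrier) = g i₀ := by
  classical
  rw [DirectSum.decompose_sum, DFinsupp.finset_sum_apply, AddSubmonoidClass.coe_finset_sum,
    Finset.sum_eq_single_of_mem i₀ hi₀]
  · exact hf ▸ DirectSum.decompose_of_mem_same _ (hg i₀ hi₀)
  · intro i hi hne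
    exact DirectSum.decompose_of_mem_ne _ (hg i hi)
      (fun h => hne (hinj i hi i₀ hi₀ (h.trans hf.symm)))

/-- Auxiliary: an element is the sum of its homogeneous components over any finset
containing the support. -/
lemma GradedFAlg.sum_decompose_superset {F : Type} [Field F] (A : GradedFAlg F)
    [∀ (i : ℤ) (x : A.grading i), Decidable (x ≠ 0)] (x : A.carrier)
    (s : Finset ℤ) (hs : (DirectSum.decompose A.grading x).support ⊆ s) :
    ∑ i ∈ s, ((DirectSum.decompose A.grading x i : A.grading i) : A.carrier) = x := by
  classical
  rw [← Finset.sum_subset hs (fun i _ hi => by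
      rw [DFinsupp.notMem_support_iff.mp hi, ZeroMemClass.coe_zero])]
  exact DirectSum.sum_support_decompose A.grading x

/-- Auxiliary: in `R = F[u]/(u^{n+1})`, the degree-`2m` part is spanned by `u^m`. -/
lemma IsCPnAlg.grading_eq_span {F : Type} [Field F] {R : GradedFAlg F} {u : R.carrier}
    {n : ℕ} (hR : IsCPnAlg R u n) (m : ℕ) (hm : m ≤ n) (v : R.carrier)
    (hv : v ∈ R.grading (2 * (m : ℤ))) : ∃ c : F, v = c • u ^ m := by
  classical
  obtain ⟨b, hb⟩ := hR.basis
  have hrepr : ∑ i : Fin (n + 1), b.repr v i • u ^ (i : ℕ) = v := by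
    conv_rhs => rw [← b.sum_repr v]
    exact Finset.sum_congr rfl (fun i _ => by rw [hb])
  have hmem : ∀ i : Fin (n + 1), b.repr v i • u ^ (i : ℕ) ∈ R.grading (2 * ((i : ℕ) : ℤ)) := by
    intro i
    refine Submodule.smul_mem _ _ ?_
    have := SetLike.pow_mem_graded (A := R.grading) (i : ℕ) hR.u_mem
    convert this using 2
    simp [nsmul_eq_mul, mul_comm]
  have h2 := GradedFAlg.proj_sum R (2 * (m : ℤ)) Finset.univ
    (fun i : Fin (n + 1) => 2 * ((i : ℕ) : ℤ)) (fun i => b.repr v i • u ^ (i : ℕ))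
    (fun i _ => hmem i)
    (fun i _ i' _ h => Fin.ext (by
      have h' : 2 * ((i : ℕ) : ℤ) = 2 * ((i' : ℕ) : ℤ) := h
      omega))
    ⟨m, by omega⟩ (Finset.mem_univ _) rfl
  rw [hrepr, DirectSum.decompose_of_mem_same _ hv] at h2
  exact ⟨b.repr v ⟨m, by omega⟩, h2⟩

/-- Let `R = F[u]/(u^{n+1})` with `deg u = 2`, `n ≥ 1`, and let
`d` be even with `2 ≤ d ≤ 2n+2`. Every `d`-dimensional deformation of `R` is
isomorphic, as a deformation of `R`, to `(R̃_α, t, j)` for some `α ∈ F`;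
equivalently, every deformation of `R` is itself a model of some `R̃_α`. -/
theorem every_deformation_of_CPn_is_Ralpha
    {F : Type} [Field F] (R : GradedFAlg F) (u : R.carrier) (n : ℕ) (hn : 1 ≤ n)
    (hR : IsCPnAlg R u n)
    (d : ℤ) (heven : Even d) (hd2 : 2 ≤ d) (hd : d ≤ 2 * (n : ℤ) + 2)
    (D : Deformation F R d) :
    ∃ (α : F) (ut : D.alg.carrier), IsRAlphaDef R u n d α D ut := by
  classical
  obtain ⟨e, he⟩ := heven
  -- the degree, as a natural number, of the companion power of ũ
  set kZ : ℤ := (n : ℤ) + 1 - e with hkZ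
  have hkZ_nonneg : 0 ≤ kZ := by omega
  set kN : ℕ := kZ.toNat with hkN
  have hkNZ : (kN : ℤ) = kZ := Int.toNat_of_nonneg hkZ_nonneg
  have hkN_le : kN ≤ n := by omega
  -- Step 1: lift u to a homogeneous element ũ of degree 2
  obtain ⟨x, hx⟩ := D.j_surj u
  set ut : D.alg.carrier := ((DirectSum.decompose D.alg.grading x 2 : D.alg.grading 2) : D.alg.carrier)
    with hut
  have hut_mem : ut ∈ D.alg.grading 2 := SetLike.coe_mem _
  have hj_ut : D.j.toAlgHom ut = u := by
    set s : Finset ℤ := insert 2 (DirectSum.decompose D.alg.grading x).support with hs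
    have hxsum : ∑ i ∈ s, ((DirectSum.decompose D.alg.grading x i : D.alg.grading i) : D.alg.carrier)
        = x :=
      GradedFAlg.sum_decompose_superset D.alg x s (Finset.subset_insert _ _)
    have hjsum : ∑ i ∈ s,
        D.j.toAlgHom ((DirectSum.decompose D.alg.grading x i : D.alg.grading i) : D.alg.carrier) = u := by
      rw [← map_sum, hxsum, hx]
    have h2 := GradedFAlg.proj_sum R 2 s (fun i => i)
      (fun i => D.j.toAlgHom ((DirectSum.decompose D.alg.grading x i : D.alg.grading i) : D.alg.carrier))
      (fun i _ => D.j.graded i _ (SetLike.coe_mem _))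
      (fun i _ i' _ h => h) 2 (Finset.mem_insert_self _ _) rfl
    rw [hjsum, DirectSum.decompose_of_mem_same _ hR.u_mem] at h2
    exact h2.symm
  -- Step 2: ũ^(n+1) is in the kernel of j, hence of the form t * y
  have hpow_mem : ut ^ (n + 1) ∈ D.alg.grading (2 * (n : ℤ) + 2) := by
    have := SetLike.pow_mem_graded (A := D.alg.grading) (n + 1) hut_mem
    convert this using 2
    push_cast [nsmul_eq_mul]
    ring
  have hker : D.j.toAlgHom (ut ^ (n + 1)) = 0 := by
    rw [map_pow, hj_ut, hR.u_pow]
  obtain ⟨y, hy⟩ := (D.j_ker _).mp hker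
  -- Step 3: replace y by its homogeneous component of degree 2n+2-d
  set m₀ : ℤ := 2 * (n : ℤ) + 2 - d with hm₀
  set y' : D.alg.carrier := ((DirectSum.decompose D.alg.grading y m₀ : D.alg.grading m₀) : D.alg.carrier)
    with hy'
  have hy'_mem : y' ∈ D.alg.grading m₀ := SetLike.coe_mem _
  have hw : ut ^ (n + 1) = D.t * y' := by
    set s : Finset ℤ := insert m₀ (DirectSum.decompose D.alg.grading y).support with hs
    have hysum : ∑ i ∈ s, ((DirectSum.decompose D.alg.grading y i : D.alg.grading i) : D.alg.carrier)
        = y :=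
      GradedFAlg.sum_decompose_superset D.alg y s (Finset.subset_insert _ _)
    have hty : ∑ i ∈ s,
        D.t * ((DirectSum.decompose D.alg.grading y i : D.alg.grading i) : D.alg.carrier)
        = ut ^ (n + 1) := by
      rw [← Finset.mul_sum, hysum, hy]
    have h2 := GradedFAlg.proj_sum D.alg (2 * (n : ℤ) + 2) s (fun i => d + i)
      (fun i => D.t * ((DirectSum.decompose D.alg.grading y i : D.alg.grading i) : D.alg.carrier))
      (fun i _ => SetLike.mul_mem_graded D.t_mem (SetLike.coe_mem _))
      (fun i _ i' _ h => by have h' : d + i = d + i' := h; omega)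
      m₀ (Finset.mem_insert_self _ _) (show d + m₀ = 2 * (n : ℤ) + 2 by omega)
    rw [hty, DirectSum.decompose_of_mem_same _ hpow_mem] at h2
    beta_reduce at h2
    rw [← hy'] at h2
    exact h2
  -- Step 4: j(y') lives in the 1-dimensional degree 2n+2-d part of R
  have hjy'_mem : D.j.toAlgHom y' ∈ R.grading (2 * (kN : ℤ)) := by
    have := D.j.graded m₀ y' hy'_mem
    have hmk : m₀ = 2 * (kN : ℤ) := by omega
    rwa [hmk] at this
  obtain ⟨c, hc⟩ := hR.grading_eq_span kN hkN_le _ hjy'_mem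
  -- Step 5: y' - c • ũ^kN is in the kernel, hence t * y' = c • (t * ũ^kN)
  have hker2 : D.j.toAlgHom (y' - c • ut ^ kN) = 0 := by
    rw [map_sub, map_smul, map_pow, hj_ut, hc, sub_self]
  obtain ⟨z, hz⟩ := (D.j_ker _).mp hker2
  have hy'eq : y' = c • ut ^ kN + D.t * z := by
    rw [sub_eq_iff_eq_add.mp hz, add_comm]
  have hfinal : ut ^ (n + 1) = c • (D.t * ut ^ kN) := by
    rw [hw, hy'eq, mul_add, mul_smul_comm, ← mul_assoc, D.t_sq, zero_mul, add_zero]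
  -- Conclusion
  refine ⟨-c, ut, hut_mem, hj_ut, ?_⟩
  have hidx : ((n : ℤ) + 1 - d / 2).toNat = kN := by omega
  rw [hidx, hfinal, neg_smul, add_neg_cancel]
end

section
/- Let n ≥ 1 and let d be an even integer with 4 ≤ d ≤ 2n+2 (so d ≠ 2). For α, β ∈ F, the deformations (R̃_α, t, j) and (R̃_β, t, j) of R = F[u]/(u^{n+1}) are isomorphic as deformations of R if and only if α = β. -/
variable {F : Type} [Field F]

section Aux

variable {F : Type} [Field F] {R : GradedFAlg F} {u : R.carrier} {n : ℕ} {d : ℤ}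

/-- `j t = 0`. -/
lemma aux_j_t (D : Deformation F R d) : D.j.toAlgHom D.t = 0 :=
  (D.j_ker D.t).2 ⟨1, (mul_one _).symm⟩

/-- `t` commutes with any element of degree 2 when `d` is even. -/
lemma aux_t_comm (D : Deformation F R d) (heven : Even d) {ut : D.alg.carrier}
    (hmem : ut ∈ D.alg.grading 2) : Commute D.t ut := by
  have h := D.alg.gcomm d 2 D.t ut D.t_mem hmem
  have he : Even (d * 2) := ⟨d, by ring⟩
  show D.t * ut = ut * D.t
  rw [h, Even.neg_one_zpow he, one_smul]

lemma aux_t_mul_pow_high (D : Deformation F R d) {ut : D.alg.carrier} {α : F} {k : ℕ}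
    (hrel : ut ^ (n + 1) + α • (D.t * ut ^ k) = 0) :
    ∀ m : ℕ, n + 1 ≤ m → D.t * ut ^ m = 0 := by
  have h1 : ut ^ (n + 1) = -(α • (D.t * ut ^ k)) := by
    rw [eq_neg_iff_add_eq_zero]; exact hrel
  have h0 : D.t * ut ^ (n + 1) = 0 := by
    rw [h1, mul_neg, mul_smul_comm, ← mul_assoc, D.t_sq, zero_mul, smul_zero, neg_zero]
  intro m hm
  have hm' : m = (n + 1) + (m - (n + 1)) := by omega
  rw [hm', pow_add, ← mul_assoc, h0, zero_mul]

lemma aux_pow_high (D : Deformation F R d) {ut : D.alg.carrier} {α : F} {k : ℕ}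
    (hrel : ut ^ (n + 1) + α • (D.t * ut ^ k) = 0) :
    ∀ m : ℕ, n + 1 ≤ m → ut ^ m = -(α • (D.t * ut ^ (k + (m - (n + 1))))) := by
  have h1 : ut ^ (n + 1) = -(α • (D.t * ut ^ k)) := by
    rw [eq_neg_iff_add_eq_zero]; exact hrel
  intro m hm
  obtain ⟨r, rfl⟩ : ∃ r, m = (n + 1) + r := ⟨m - (n + 1), by omega⟩
  rw [show n + 1 + r - (n + 1) = r from by omega, pow_add, h1, neg_mul, smul_mul_assoc,
    mul_assoc, ← pow_add]

/-- The `u`-powers are linearly independent in `R`. -/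
lemma aux_u_li (hR : IsCPnAlg R u n) :
    LinearIndependent F (fun i : Fin (n + 1) => u ^ (i : ℕ)) := by
  obtain ⟨b, hb⟩ := hR.basis
  have : (fun i : Fin (n + 1) => u ^ (i : ℕ)) = ⇑b := funext fun i => (hb i).symm
  rw [this]
  exact b.linearIndependent

lemma aux_u_pow_ne_zero (hR : IsCPnAlg R u n) {m : ℕ} (hm : m ≤ n) : u ^ m ≠ 0 := by
  obtain ⟨b, hb⟩ := hR.basis
  have := b.ne_zero ⟨m, by omega⟩
  rwa [hb ⟨m, by omega⟩] at this

lemma aux_finrank (hR : IsCPnAlg R u n) (D : Deformation F R d) :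
    Module.finrank F D.alg.carrier = 2 * (n + 1) := by
  set L := D.j.toAlgHom.toLinearMap with hL
  set M := LinearMap.mulLeft F D.t with hM
  have hkerL : LinearMap.ker L = LinearMap.range M := by
    ext x
    simp only [LinearMap.mem_ker, LinearMap.mem_range, hL, hM, AlgHom.toLinearMap_apply,
      LinearMap.mulLeft_apply]
    rw [D.j_ker x]
    exact ⟨fun ⟨y, hy⟩ => ⟨y, hy.symm⟩, fun ⟨y, hy⟩ => ⟨y, hy.symm⟩⟩
  have hkerM : LinearMap.ker M = LinearMap.range M := by
    ext x
    simp only [LinearMap.mem_ker, LinearMap.mem_range, hM, LinearMap.mulLeft_apply]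
    rw [D.t_ann x]
    exact ⟨fun ⟨y, hy⟩ => ⟨y, hy.symm⟩, fun ⟨y, hy⟩ => ⟨y, hy.symm⟩⟩
  have hrangeL : LinearMap.range L = ⊤ := LinearMap.range_eq_top.2 D.j_surj
  have h1 := LinearMap.finrank_range_add_finrank_ker L
  have h2 := LinearMap.finrank_range_add_finrank_ker M
  have hRrank : Module.finrank F R.carrier = n + 1 := by
    obtain ⟨b, _⟩ := hR.basis
    rw [Module.finrank_eq_card_basis b, Fintype.card_fin]
  rw [hrangeL, finrank_top, hRrank, hkerL] at h1
  rw [hkerM] at h2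
  omega

/-- The basis `1, ũ, …, ũⁿ, t, tũ, …, tũⁿ` of the deformed algebra. -/
lemma aux_basis (hR : IsCPnAlg R u n) (D : Deformation F R d) (ut : D.alg.carrier)
    (hju : D.j.toAlgHom ut = u) :
    ∃ b : Module.Basis (Fin (n + 1) ⊕ Fin (n + 1)) F D.alg.carrier,
      (∀ i : Fin (n + 1), b (Sum.inl i) = ut ^ (i : ℕ)) ∧
      (∀ i : Fin (n + 1), b (Sum.inr i) = D.t * ut ^ (i : ℕ)) := by
  set v : Fin (n + 1) ⊕ Fin (n + 1) → D.alg.carrier :=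
    Sum.elim (fun i => ut ^ (i : ℕ)) (fun i => D.t * ut ^ (i : ℕ)) with hv
  have hjt : D.j.toAlgHom D.t = 0 := aux_j_t D
  have hj_pow : ∀ m : ℕ, D.j.toAlgHom (ut ^ m) = u ^ m := by
    intro m; rw [map_pow, hju]
  have huli := aux_u_li hR
  have hli : LinearIndependent F v := by
    rw [Fintype.linearIndependent_iff]
    intro g hg
    rw [Fintype.sum_sum_type] at hg
    set A := ∑ i : Fin (n + 1), g (Sum.inl i) • ut ^ (i : ℕ) with hA
    set B := ∑ i : Fin (n + 1), g (Sum.inr i) • ut ^ (i : ℕ) with hB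
    have hg' : A + D.t * B = 0 := by
      rw [hA, hB, Finset.mul_sum]
      simp only [mul_smul_comm]
      exact hg
    have hjB : D.j.toAlgHom (D.t * B) = 0 := by
      rw [map_mul, hjt, zero_mul]
    have hgl : ∀ i, g (Sum.inl i) = 0 := by
      have : D.j.toAlgHom A = 0 := by
        have := congrArg (D.j.toAlgHom) hg'
        rwa [map_add, hjB, add_zero, map_zero] at this
      rw [hA, map_sum] at this
      simp only [map_smul, hj_pow] at this
      exact Fintype.linearIndependent_iff.1 huli _ this
    have hA0 : A = 0 := by
      rw [hA]
      exact Finset.sum_eq_zero fun i _ => by rw [hgl i, zero_smul]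
    have htB : D.t * B = 0 := by rw [hA0, zero_add] at hg'; exact hg'
    have hgr : ∀ i, g (Sum.inr i) = 0 := by
      obtain ⟨y, hy⟩ := (D.t_ann B).1 htB
      have hjB0 : D.j.toAlgHom B = 0 := by
        rw [hy, map_mul, hjt, zero_mul]
      rw [hB, map_sum] at hjB0
      simp only [map_smul, hj_pow] at hjB0
      exact Fintype.linearIndependent_iff.1 huli _ hjB0
    intro m
    rcases m with i | i
    · exact hgl i
    · exact hgr i
  have hcard : Fintype.card (Fin (n + 1) ⊕ Fin (n + 1)) = Module.finrank F D.alg.carrier := by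
    rw [aux_finrank hR D, Fintype.card_sum, Fintype.card_fin]
    omega
  refine ⟨basisOfLinearIndependentOfCardEqFinrank hli hcard, fun i => ?_, fun i => ?_⟩ <;>
    rw [coe_basisOfLinearIndependentOfCardEqFinrank hli hcard] <;> rfl

end Aux

section Proj

variable {F : Type} [Field F]

/-- Projection onto the degree-`i` part of a graded algebra. -/
noncomputable def gprj (A : GradedFAlg F) (i : ℤ) : A.carrier →ₗ[F] A.carrier :=
  (A.grading i).subtype ∘ₗ (DirectSum.component F ℤ (fun j => ↥(A.grading j)) i) ∘ₗ
    (DirectSum.decomposeLinearEquiv A.grading).toLinearMap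

lemma gprj_apply (A : GradedFAlg F) (i : ℤ) (x : A.carrier) :
    gprj A i x = ((DirectSum.decompose A.grading x) i : A.carrier) := rfl

lemma gprj_of_mem_same (A : GradedFAlg F) {i : ℤ} {x : A.carrier} (hx : x ∈ A.grading i) :
    gprj A i x = x := by
  rw [gprj_apply, DirectSum.decompose_of_mem_same _ hx]

lemma gprj_of_mem_ne (A : GradedFAlg F) {i j : ℤ} {x : A.carrier} (hx : x ∈ A.grading j)
    (hij : j ≠ i) : gprj A i x = 0 := by
  rw [gprj_apply, DirectSum.decompose_of_mem_ne _ hx hij]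

/-- If a linear map sends the members of a homogeneous basis into homogeneous pieces of
the same degrees, then it is graded. -/
lemma graded_of_basis {A B : GradedFAlg F} (f : A.carrier →ₗ[F] B.carrier)
    {ι : Type} [Fintype ι] (b : Module.Basis ι F A.carrier) (deg : ι → ℤ)
    (hdeg : ∀ m, b m ∈ A.grading (deg m)) (hf : ∀ m, f (b m) ∈ B.grading (deg m))
    (i : ℤ) (x : A.carrier) (hx : x ∈ A.grading i) : f x ∈ B.grading i := by
  have hxe : x = ∑ m, (b.repr x) m • gprj A i (b m) := by
    conv_lhs => rw [← gprj_of_mem_same A hx, ← Module.Basis.sum_repr b x]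
    rw [map_sum]
    simp only [map_smul]
  rw [hxe, map_sum]
  refine Submodule.sum_mem _ fun m _ => ?_
  by_cases h : deg m = i
  · rw [gprj_of_mem_same A (h ▸ hdeg m), map_smul]
    exact Submodule.smul_mem _ _ (h ▸ hf m)
  · rw [gprj_of_mem_ne A (hdeg m) h, smul_zero, map_zero]
    exact Submodule.zero_mem _

end Proj

/-- Let `R = F[u]/(u^{n+1})` with `deg u = 2`, `n ≥ 1`, and let
`d` be even with `4 ≤ d ≤ 2n+2` (so `d ≠ 2`). For `α, β ∈ F`, the deformations
`(R̃_α, t, j)` and `(R̃_β, t, j)` of `R` are isomorphic as deformations of `R`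
if and only if `α = β`. -/
theorem Ralpha_iso_Rbeta_iff_eq
    {F : Type} [Field F] (R : GradedFAlg F) (u : R.carrier) (n : ℕ) (hn : 1 ≤ n)
    (hR : IsCPnAlg R u n)
    (d : ℤ) (heven : Even d) (hd4 : 4 ≤ d) (hd : d ≤ 2 * (n : ℤ) + 2) (α β : F)
    (D1 D2 : Deformation F R d) (ut1 : D1.alg.carrier) (ut2 : D2.alg.carrier)
    (h1 : IsRAlphaDef R u n d α D1 ut1) (h2 : IsRAlphaDef R u n d β D2 ut2) :
    Deformation.Iso D1 D2 ↔ α = β := by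
  set k : ℕ := ((n : ℤ) + 1 - d / 2).toNat with hk
  have hkn : k ≤ n := by omega
  obtain ⟨b2, hb2l, hb2r⟩ := aux_basis hR D2 ut2 h2.j_u
  constructor
  · rintro ⟨φ, -⟩
    have hje : D2.j.toAlgHom (φ.toHom.toAlgHom ut1) = u := by
      rw [φ.over' ut1]
      simp only [GradedFAlg.Hom.id, AlgHom.coe_id, id_eq]
      exact h1.j_u
    set z := φ.toHom.toAlgHom ut1 - ut2 with hz
    have hz2 : z ∈ D2.alg.grading 2 :=
      Submodule.sub_mem _ (φ.toHom.graded 2 ut1 h1.mem) h2.mem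
    have hjz : D2.j.toAlgHom z = 0 := by rw [hz, map_sub, hje, h2.j_u, sub_self]
    obtain ⟨y, hy⟩ := (D2.j_ker z).1 hjz
    have hty : ∀ x, gprj D2.alg 2 (D2.t * x) = 0 := by
      intro x
      conv_lhs => rw [← Module.Basis.sum_repr b2 x, Finset.mul_sum]
      simp only [mul_smul_comm]
      rw [map_sum]
      refine Finset.sum_eq_zero fun m _ => ?_
      rcases m with i | i
      · rw [map_smul, hb2l i]
        have hmem : D2.t * ut2 ^ (i : ℕ) ∈ D2.alg.grading (d + (i : ℕ) • (2 : ℤ)) :=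
          SetLike.mul_mem_graded D2.t_mem (SetLike.pow_mem_graded _ h2.mem)
        rw [gprj_of_mem_ne D2.alg hmem (by simp only [nsmul_eq_mul]; omega), smul_zero]
      · rw [map_smul, hb2r i, ← mul_assoc, D2.t_sq, zero_mul, map_zero, smul_zero]
    have hz0 : z = 0 := by rw [← gprj_of_mem_same D2.alg hz2, hy, hty]
    have heq : φ.toHom.toAlgHom ut1 = ut2 := by rwa [sub_eq_zero] at hz0
    have hrel1 := congrArg φ.toHom.toAlgHom h1.rel
    rw [map_add, map_pow, map_smul, map_mul, φ.map_t, map_pow, heq, map_zero] at hrel1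
    have hsub : (α - β) • (D2.t * ut2 ^ k) = 0 := by
      have h2r := h2.rel
      rw [sub_smul]
      have hα : α • (D2.t * ut2 ^ k) = -(ut2 ^ (n + 1)) := by
        rw [eq_neg_iff_add_eq_zero, add_comm]; exact hrel1
      have hβ : β • (D2.t * ut2 ^ k) = -(ut2 ^ (n + 1)) := by
        rw [eq_neg_iff_add_eq_zero, add_comm]; exact h2r
      rw [hα, hβ, sub_self]
    have hX : D2.t * ut2 ^ k ≠ 0 := by
      intro h0
      obtain ⟨y', hy'⟩ := (D2.t_ann _).1 h0
      have hj0 : D2.j.toAlgHom (ut2 ^ k) = 0 := by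
        rw [hy', map_mul, aux_j_t, zero_mul]
      rw [map_pow, h2.j_u] at hj0
      exact aux_u_pow_ne_zero hR hkn hj0
    rcases smul_eq_zero.1 hsub with h | h
    · exact sub_eq_zero.1 h
    · exact absurd h hX
  · rintro rfl
    obtain ⟨b1, hb1l, hb1r⟩ := aux_basis hR D1 ut1 h1.j_u
    set e := b1.equiv b2 (Equiv.refl _) with he
    have heb : ∀ m, e (b1 m) = b2 m := fun m => by
      rw [he, Module.Basis.equiv_apply, Equiv.refl_apply]
    have hel : ∀ i : Fin (n + 1), e (ut1 ^ (i : ℕ)) = ut2 ^ (i : ℕ) := fun i => by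
      rw [← hb1l i, ← hb2l i]; exact heb (Sum.inl i)
    have her : ∀ i : Fin (n + 1), e (D1.t * ut1 ^ (i : ℕ)) = D2.t * ut2 ^ (i : ℕ) := fun i => by
      rw [← hb1r i, ← hb2r i]; exact heb (Sum.inr i)
    have hfut : ∀ m : ℕ, e (D1.t * ut1 ^ m) = D2.t * ut2 ^ m := by
      intro m
      rcases le_or_gt m n with hm | hm
      · exact her ⟨m, by omega⟩
      · rw [aux_t_mul_pow_high D1 h1.rel m (by omega),
          aux_t_mul_pow_high D2 h2.rel m (by omega), map_zero]
    have hfu : ∀ m : ℕ, e (ut1 ^ m) = ut2 ^ m := by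
      intro m
      rcases le_or_gt m n with hm | hm
      · exact hel ⟨m, by omega⟩
      · rw [aux_pow_high D1 h1.rel m (by omega), aux_pow_high D2 h2.rel m (by omega),
          map_neg, map_smul, hfut]
    have hc1 : ∀ i : ℕ, Commute D1.t (ut1 ^ i) :=
      fun i => (aux_t_comm D1 heven h1.mem).pow_right i
    have hc2 : ∀ i : ℕ, Commute D2.t (ut2 ^ i) :=
      fun i => (aux_t_comm D2 heven h2.mem).pow_right i
    have hbmul : ∀ m m', e (b1 m * b1 m') = e (b1 m) * e (b1 m') := by
      rintro (i | i) (i' | i')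
      · rw [hb1l i, hb1l i', ← pow_add, hfu, hfu, hfu, pow_add]
      · rw [hb1l i, hb1r i', ← mul_assoc, ← (hc1 (i : ℕ)).eq, mul_assoc, ← pow_add, hfut,
          hfu, hfut, pow_add, ← mul_assoc,
          ← mul_assoc (ut2 ^ (i : ℕ)) D2.t (ut2 ^ (i' : ℕ)), ← (hc2 (i : ℕ)).eq]
      · rw [hb1r i, hb1l i', mul_assoc, ← pow_add, hfut, hfut, hfu, pow_add, mul_assoc]
      · rw [hb1r i, hb1r i', hfut, hfut]
        have l1 : D1.t * ut1 ^ (i : ℕ) * (D1.t * ut1 ^ (i' : ℕ)) = 0 := by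
          rw [mul_assoc, ← mul_assoc (ut1 ^ (i : ℕ)), ← (hc1 (i : ℕ)).eq, mul_assoc,
            ← mul_assoc, ← mul_assoc, D1.t_sq, zero_mul, zero_mul]
        have l2 : D2.t * ut2 ^ (i : ℕ) * (D2.t * ut2 ^ (i' : ℕ)) = 0 := by
          rw [mul_assoc, ← mul_assoc (ut2 ^ (i : ℕ)), ← (hc2 (i : ℕ)).eq, mul_assoc,
            ← mul_assoc, ← mul_assoc, D2.t_sq, zero_mul, zero_mul]
        rw [l1, l2, map_zero]
    have hone : e (1 : D1.alg.carrier) = 1 := by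
      have := hfu 0; rwa [pow_zero, pow_zero] at this
    have hmul : ∀ x y : D1.alg.carrier, e (x * y) = e x * e y := by
      have hB : LinearMap.compr₂ (LinearMap.mul F D1.alg.carrier) e.toLinearMap =
          LinearMap.compl₁₂ (LinearMap.mul F D2.alg.carrier) e.toLinearMap e.toLinearMap := by
        refine Module.Basis.ext b1 fun m => ?_
        refine Module.Basis.ext b1 fun m' => ?_
        simpa using hbmul m m'
      intro x y
      have := DFunLike.congr_fun (DFunLike.congr_fun hB x) y
      simpa using this
    set f : D1.alg.carrier →ₐ[F] D2.alg.carrier := AlgHom.ofLinearMap e.toLinearMap hone hmul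
      with hf
    have hfapp : ∀ x, f x = e x := fun x => rfl
    set deg : Fin (n + 1) ⊕ Fin (n + 1) → ℤ :=
      Sum.elim (fun i : Fin (n + 1) => (i : ℕ) • (2 : ℤ))
        (fun i : Fin (n + 1) => d + (i : ℕ) • (2 : ℤ)) with hdegdef
    have hdeg1 : ∀ m, b1 m ∈ D1.alg.grading (deg m) := by
      rintro (i | i)
      · rw [hb1l i]; exact SetLike.pow_mem_graded _ h1.mem
      · rw [hb1r i]; exact SetLike.mul_mem_graded D1.t_mem (SetLike.pow_mem_graded _ h1.mem)
    have hdeg2 : ∀ m, e.toLinearMap (b1 m) ∈ D2.alg.grading (deg m) := by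
      rintro (i | i)
      · show e (b1 (Sum.inl i)) ∈ _
        rw [heb, hb2l i]; exact SetLike.pow_mem_graded _ h2.mem
      · show e (b1 (Sum.inr i)) ∈ _
        rw [heb, hb2r i]
        exact SetLike.mul_mem_graded D2.t_mem (SetLike.pow_mem_graded _ h2.mem)
    have hgraded : ∀ (i : ℤ) (x : D1.alg.carrier), x ∈ D1.alg.grading i →
        f x ∈ D2.alg.grading i := by
      intro i x hx
      exact graded_of_basis e.toLinearMap b1 deg hdeg1 hdeg2 i x hx
    have hmapt : f D1.t = D2.t := by
      have := hfut 0
      rw [pow_zero, mul_one, pow_zero, mul_one] at this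
      rw [hfapp]; exact this
    have hover : ∀ x, D2.j.toAlgHom (f x) =
        (GradedFAlg.Hom.id R).toAlgHom (D1.j.toAlgHom x) := by
      have hL : D2.j.toAlgHom.toLinearMap ∘ₗ e.toLinearMap = D1.j.toAlgHom.toLinearMap := by
        refine Module.Basis.ext b1 fun m => ?_
        rcases m with i | i
        · simp only [LinearMap.comp_apply, AlgHom.toLinearMap_apply, LinearEquiv.coe_coe]
          rw [heb, hb2l i, hb1l i, map_pow, map_pow, h1.j_u, h2.j_u]
        · simp only [LinearMap.comp_apply, AlgHom.toLinearMap_apply, LinearEquiv.coe_coe]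
          rw [heb, hb2r i, hb1r i, map_mul, map_mul, aux_j_t, aux_j_t, zero_mul, zero_mul]
      intro x
      have := DFunLike.congr_fun hL x
      simp only [LinearMap.comp_apply, AlgHom.toLinearMap_apply, LinearEquiv.coe_coe] at this
      simp only [GradedFAlg.Hom.id, AlgHom.coe_id, id_eq]
      rw [hfapp]; exact this
    refine ⟨⟨⟨f, hgraded⟩, hmapt, hover⟩, ?_⟩
    exact e.bijective
end

section
/- Let R be a graded F-algebra, ℓ : R² → F an F-linear map, N > 0, and ψ : R × R → R a graded symmetric F-bilinear map of degree −2N satisfying properties (1), (2) and (3) (with respect to ℓ). If (R̃1, t1, j1) and (R̃2, t2, j2) are d-dimensional deformations of R each of which admits an extension of ψ, then their sum also admits an extension of ψ. (In particular, the subset Def_d(R, ψ) ⊆ Def_d(R) of isomorphism classes of deformations admitting an extension of ψ is closed under the sum of deformations.) -/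
variable {F : Type} [Field F]

theorem Deformation.j_t {A : GradedFAlg F} {d : ℤ} (D : Deformation F A d) :
    D.j.toAlgHom D.t = 0 := (D.j_ker D.t).mpr ⟨1, (mul_one D.t).symm⟩

/-- The subalgebra `Δ ⊆ R̃₁ × R̃₂` of pairs `(x₁, x₂)` with `j₁ x₁ = j₂ x₂`. -/
def sumSubalg {A : GradedFAlg F} {d : ℤ} (D1 D2 : Deformation F A d) :
    Subalgebra F (D1.alg.carrier × D2.alg.carrier) :=
  AlgHom.equalizer (D1.j.toAlgHom.comp (AlgHom.fst F D1.alg.carrier D2.alg.carrier))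
    (D2.j.toAlgHom.comp (AlgHom.snd F D1.alg.carrier D2.alg.carrier))

/-- The element `(t₁, 0)` of `Δ`. -/
def sumT1 {A : GradedFAlg F} {d : ℤ} (D1 D2 : Deformation F A d) : sumSubalg D1 D2 :=
  ⟨(D1.t, 0), by show _ = _; simp [Deformation.j_t]⟩

/-- The element `(0, t₂)` of `Δ`. -/
def sumT2 {A : GradedFAlg F} {d : ℤ} (D1 D2 : Deformation F A d) : sumSubalg D1 D2 :=
  ⟨(0, D2.t), by show _ = _; simp [Deformation.j_t]⟩

/-- The element `(t₁, -t₂)` of `Δ`. -/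
def sumTT {A : GradedFAlg F} {d : ℤ} (D1 D2 : Deformation F A d) : sumSubalg D1 D2 :=
  ⟨(D1.t, -D2.t), by show _ = _; simp [Deformation.j_t]⟩

/-- `D` realizes the sum of the deformations `D1` and `D2`: there is a surjective
algebra homomorphism `π : Δ → D.alg`, compatible with the gradings, with kernel
`(t₁, -t₂)·Δ`, sending the class of `(t₁,0)` and of `(0,t₂)` to `t`, and lying
over `j₁` (equivalently `j₂`). -/
def IsSumOf {A : GradedFAlg F} {d : ℤ} (D1 D2 D : Deformation F A d) : Prop :=
  ∃ π : ↥(sumSubalg D1 D2) →ₐ[F] D.alg.carrier,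
    Function.Surjective π ∧
    (∀ (i : ℤ) (z : sumSubalg D1 D2), z.val.1 ∈ D1.alg.grading i →
      z.val.2 ∈ D2.alg.grading i → π z ∈ D.alg.grading i) ∧
    π (sumT1 D1 D2) = D.t ∧
    π (sumT2 D1 D2) = D.t ∧
    (∀ z, π z = 0 ↔ ∃ w, z = sumTT D1 D2 * w) ∧
    (∀ z : sumSubalg D1 D2, D.j.toAlgHom (π z) = D1.j.toAlgHom z.val.1)

/-- An extension of `ψ` to a deformation `(R̃, t, j)` of `R` (Definition 4.2 of
the paper, with the divisor condition expressed via a linear functional `ℓ` on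
degree-two classes): a graded symmetric bilinear map `ψ̃` of degree `−2N` with
(1') the associativity identity, (2') `ψ̃(1,·) = ψ̃(t,·) = 0`,
(3') `ψ̃(w,·) = 0` whenever `w ∈ R̃²` satisfies `ℓ(j w) = 0`, and
(4') `j(ψ̃(x,y)) = ψ(j x, j y)`. -/
structure IsExtensionOf {F : Type} [Field F] {R : GradedFAlg F}
    (l : R.carrier →ₗ[F] F) (N : ℕ)
    (ψ : R.carrier →ₗ[F] R.carrier →ₗ[F] R.carrier) {d : ℤ} (D : Deformation F R d)
    (ψt : D.alg.carrier →ₗ[F] D.alg.carrier →ₗ[F] D.alg.carrier) : Prop where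
  deg : ∀ (i j : ℤ) (x y : D.alg.carrier), x ∈ D.alg.grading i → y ∈ D.alg.grading j →
    ψt x y ∈ D.alg.grading (i + j - 2 * (N : ℤ))
  symm : ∀ (i j : ℤ) (x y : D.alg.carrier), x ∈ D.alg.grading i → y ∈ D.alg.grading j →
    ψt x y = ((-1 : F) ^ (i * j)) • ψt y x
  assoc : ∀ x y z : D.alg.carrier,
    x * ψt y z - ψt (x * y) z + ψt x (y * z) - ψt x y * z = 0
  one : ∀ x : D.alg.carrier, ψt 1 x = 0
  t_zero : ∀ x : D.alg.carrier, ψt D.t x = 0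
  div : ∀ w : D.alg.carrier, w ∈ D.alg.grading 2 → l (D.j.toAlgHom w) = 0 →
    ∀ x : D.alg.carrier, ψt w x = 0
  compat : ∀ x y : D.alg.carrier,
    D.j.toAlgHom (ψt x y) = ψ (D.j.toAlgHom x) (D.j.toAlgHom y)


/-! ### Auxiliary machinery for the proof -/

section Aux

open DirectSum

/-- The `F`-linear projection onto the degree-`i` part of a graded `F`-algebra. -/
noncomputable def gproj (A : GradedFAlg F) (i : ℤ) : A.carrier →+ A.carrier :=
  GradedRing.proj A.grading i

lemma gproj_apply (A : GradedFAlg F) (i : ℤ) (x : A.carrier) :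
    gproj A i x = (DirectSum.decompose A.grading x i : A.carrier) :=
  GradedRing.proj_apply _ _ _

lemma gproj_mem (A : GradedFAlg F) (i : ℤ) (x : A.carrier) :
    gproj A i x ∈ A.grading i := by
  rw [gproj_apply]; exact SetLike.coe_mem _

lemma gproj_of_mem_same (A : GradedFAlg F) {i : ℤ} {x : A.carrier}
    (h : x ∈ A.grading i) : gproj A i x = x := by
  rw [gproj_apply]; exact DirectSum.decompose_of_mem_same _ h

lemma gproj_of_mem_ne (A : GradedFAlg F) {i k : ℤ} {x : A.carrier}
    (h : x ∈ A.grading k) (hne : k ≠ i) : gproj A i x = 0 := by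
  rw [gproj_apply]; exact DirectSum.decompose_of_mem_ne _ h hne

lemma gproj_smul (A : GradedFAlg F) (i : ℤ) (c : F) (x : A.carrier) :
    gproj A i (c • x) = c • gproj A i x := by
  simp only [gproj_apply]
  rw [DirectSum.decompose_smul]
  rfl

/-- A homomorphism of graded algebras commutes with the projections. -/
lemma gproj_hom {A B : GradedFAlg F} (f : GradedFAlg.Hom A B) (i : ℤ) (x : A.carrier) :
    f.toAlgHom (gproj A i x) = gproj B i (f.toAlgHom x) := by
  induction x using DirectSum.Decomposition.inductionOn A.grading with
  | zero => simp
  | @homogeneous k m =>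
      by_cases h : k = i
      · subst h
        rw [gproj_of_mem_same A m.2, gproj_of_mem_same B (f.graded k m m.2)]
      · rw [gproj_of_mem_ne A m.2 h, gproj_of_mem_ne B (f.graded k m m.2) h, map_zero]
  | add x y hx hy => simp only [map_add, hx, hy]

/-- Any element is the sum of its projections over a sufficiently big finite set. -/
lemma sum_gproj (A : GradedFAlg F) (x : A.carrier) (S : Finset ℤ)
    (hS : ∀ i, gproj A i x ≠ 0 → i ∈ S) : ∑ i ∈ S, gproj A i x = x := by
  classical
  have hsub : (DirectSum.decompose A.grading x).support ⊆ S := by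
    intro i hi
    refine hS i ?_
    rw [gproj_apply]
    intro h0
    exact (DFinsupp.mem_support_iff.mp hi) (Subtype.ext h0)
  rw [← Finset.sum_subset hsub (fun i _ hi => ?_)]
  · conv_rhs => rw [← DirectSum.sum_support_decompose A.grading x]
    exact Finset.sum_congr rfl fun i _ => gproj_apply A i x
  · rw [gproj_apply, DFinsupp.notMem_support_iff.mp hi, ZeroMemClass.coe_zero]

variable {R : GradedFAlg F} {d : ℤ} {D1 D2 : Deformation F R d}

lemma sumSubalg_prop (z : ↥(sumSubalg D1 D2)) :
    D1.j.toAlgHom z.val.1 = D2.j.toAlgHom z.val.2 := z.2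

lemma sumSubalg_mem {z : D1.alg.carrier × D2.alg.carrier}
    (h : D1.j.toAlgHom z.1 = D2.j.toAlgHom z.2) : z ∈ sumSubalg D1 D2 := h

/-- The degree-`i` homogeneous piece of an element of `Δ`, again an element of `Δ`. -/
noncomputable def deltaPiece (z : ↥(sumSubalg D1 D2)) (i : ℤ) : ↥(sumSubalg D1 D2) :=
  ⟨(gproj D1.alg i z.val.1, gproj D2.alg i z.val.2), by
    refine sumSubalg_mem ?_
    show D1.j.toAlgHom (gproj D1.alg i z.val.1) = D2.j.toAlgHom (gproj D2.alg i z.val.2)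
    rw [gproj_hom D1.j, gproj_hom D2.j, sumSubalg_prop z]⟩

lemma deltaPiece_fst (z : ↥(sumSubalg D1 D2)) (i : ℤ) :
    (deltaPiece z i).val.1 = gproj D1.alg i z.val.1 := rfl

lemma deltaPiece_snd (z : ↥(sumSubalg D1 D2)) (i : ℤ) :
    (deltaPiece z i).val.2 = gproj D2.alg i z.val.2 := rfl

lemma deltaPiece_mem_fst (z : ↥(sumSubalg D1 D2)) (i : ℤ) :
    (deltaPiece z i).val.1 ∈ D1.alg.grading i := gproj_mem _ _ _

lemma deltaPiece_mem_snd (z : ↥(sumSubalg D1 D2)) (i : ℤ) :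
    (deltaPiece z i).val.2 ∈ D2.alg.grading i := gproj_mem _ _ _

/-- Every element of `Δ` is a finite sum of its homogeneous pieces. -/
lemma exists_piece_sum (z : ↥(sumSubalg D1 D2)) :
    ∃ S : Finset ℤ, ∑ k ∈ S, deltaPiece z k = z := by
  classical
  refine ⟨(DirectSum.decompose D1.alg.grading z.val.1).support ∪
    (DirectSum.decompose D2.alg.grading z.val.2).support, ?_⟩
  apply Subtype.ext
  apply Prod.ext
  · push_cast [AddSubmonoidClass.coe_finset_sum]
    rw [Prod.fst_sum]
    refine sum_gproj _ _ _ fun i hi => Finset.mem_union_left _ ?_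
    rw [gproj_apply] at hi
    exact DFinsupp.mem_support_iff.mpr fun h0 => hi (by rw [h0]; rfl)
  · push_cast [AddSubmonoidClass.coe_finset_sum]
    rw [Prod.snd_sum]
    refine sum_gproj _ _ _ fun i hi => Finset.mem_union_right _ ?_
    rw [gproj_apply] at hi
    exact DFinsupp.mem_support_iff.mpr fun h0 => hi (by rw [h0]; rfl)

end Aux


section Psi

variable {R : GradedFAlg F} {l : R.carrier →ₗ[F] F} {N : ℕ}
  {ψ : R.carrier →ₗ[F] R.carrier →ₗ[F] R.carrier} {d : ℤ}

/-- `ψ̃(t·u, v) = t·ψ̃(u, v)`, a consequence of (1') and (2'). -/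
lemma IsExtensionOf.t_mul {D : Deformation F R d}
    {ψt : D.alg.carrier →ₗ[F] D.alg.carrier →ₗ[F] D.alg.carrier}
    (h : IsExtensionOf l N ψ D ψt) (u v : D.alg.carrier) :
    ψt (D.t * u) v = D.t * ψt u v := by
  have h0 := h.assoc D.t u v
  rw [h.t_zero, h.t_zero] at h0
  simp only [zero_mul, sub_zero, add_zero] at h0
  exact (sub_eq_zero.mp h0).symm

variable {D1 D2 : Deformation F R d}
  {ψt1 : D1.alg.carrier →ₗ[F] D1.alg.carrier →ₗ[F] D1.alg.carrier}
  {ψt2 : D2.alg.carrier →ₗ[F] D2.alg.carrier →ₗ[F] D2.alg.carrier}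

/-- The bilinear map on `Δ` built from extensions on the two factors. -/
def psiDelta (h1 : IsExtensionOf l N ψ D1 ψt1) (h2 : IsExtensionOf l N ψ D2 ψt2) :
    ↥(sumSubalg D1 D2) →ₗ[F] ↥(sumSubalg D1 D2) →ₗ[F] ↥(sumSubalg D1 D2) :=
  LinearMap.mk₂ F
    (fun z w => ⟨(ψt1 z.val.1 w.val.1, ψt2 z.val.2 w.val.2), sumSubalg_mem (by
      rw [h1.compat, h2.compat, sumSubalg_prop z, sumSubalg_prop w])⟩)
    (fun z z' w => Subtype.ext (Prod.ext
      (by show ψt1 (z + z').val.1 w.val.1 = _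
          simp only [Subalgebra.coe_add, Prod.fst_add, map_add, LinearMap.add_apply])
      (by show ψt2 (z + z').val.2 w.val.2 = _
          simp only [Subalgebra.coe_add, Prod.snd_add, map_add, LinearMap.add_apply])))
    (fun c z w => Subtype.ext (Prod.ext
      (by show ψt1 (c • z).val.1 w.val.1 = _
          simp only [SetLike.val_smul, Prod.smul_fst, map_smul, LinearMap.smul_apply])
      (by show ψt2 (c • z).val.2 w.val.2 = _
          simp only [SetLike.val_smul, Prod.smul_snd, map_smul, LinearMap.smul_apply])))
    (fun z w w' => Subtype.ext (Prod.ext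
      (by show ψt1 z.val.1 (w + w').val.1 = _
          simp only [Subalgebra.coe_add, Prod.fst_add, map_add])
      (by show ψt2 z.val.2 (w + w').val.2 = _
          simp only [Subalgebra.coe_add, Prod.snd_add, map_add])))
    (fun c z w => Subtype.ext (Prod.ext
      (by show ψt1 z.val.1 (c • w).val.1 = _
          simp only [SetLike.val_smul, Prod.smul_fst, map_smul])
      (by show ψt2 z.val.2 (c • w).val.2 = _
          simp only [SetLike.val_smul, Prod.smul_snd, map_smul])))

lemma psiDelta_coe (h1 : IsExtensionOf l N ψ D1 ψt1) (h2 : IsExtensionOf l N ψ D2 ψt2)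
    (z w : ↥(sumSubalg D1 D2)) :
    (psiDelta h1 h2 z w).val = (ψt1 z.val.1 w.val.1, ψt2 z.val.2 w.val.2) := rfl

/-- `ψ̃_Δ((t₁,-t₂)·w, v) = (t₁,-t₂)·ψ̃_Δ(w, v)`. -/
lemma psiDelta_tt_mul (h1 : IsExtensionOf l N ψ D1 ψt1) (h2 : IsExtensionOf l N ψ D2 ψt2)
    (w v : ↥(sumSubalg D1 D2)) :
    psiDelta h1 h2 (sumTT D1 D2 * w) v = sumTT D1 D2 * psiDelta h1 h2 w v := by
  apply Subtype.ext
  apply Prod.ext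
  · show ψt1 (sumTT D1 D2 * w).val.1 v.val.1 = D1.t * ψt1 w.val.1 v.val.1
    have : (sumTT D1 D2 * w).val.1 = D1.t * w.val.1 := rfl
    rw [this, h1.t_mul]
  · show ψt2 (sumTT D1 D2 * w).val.2 v.val.2 = (-D2.t) * ψt2 w.val.2 v.val.2
    have : (sumTT D1 D2 * w).val.2 = (-D2.t) * w.val.2 := rfl
    rw [this, neg_mul, neg_mul, map_neg, LinearMap.neg_apply, h2.t_mul]

/-- Graded symmetry of `ψ̃_Δ` on elements with homogeneous components. -/
lemma psiDelta_symm (h1 : IsExtensionOf l N ψ D1 ψt1) (h2 : IsExtensionOf l N ψ D2 ψt2)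
    {i k : ℤ} (z w : ↥(sumSubalg D1 D2))
    (hz1 : z.val.1 ∈ D1.alg.grading i) (hz2 : z.val.2 ∈ D2.alg.grading i)
    (hw1 : w.val.1 ∈ D1.alg.grading k) (hw2 : w.val.2 ∈ D2.alg.grading k) :
    psiDelta h1 h2 z w = ((-1 : F) ^ (i * k)) • psiDelta h1 h2 w z := by
  apply Subtype.ext
  apply Prod.ext
  · show ψt1 z.val.1 w.val.1 = (((-1 : F) ^ (i * k)) • psiDelta h1 h2 w z).val.1
    rw [SetLike.val_smul, Prod.smul_fst]
    exact h1.symm i k _ _ hz1 hw1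
  · show ψt2 z.val.2 w.val.2 = (((-1 : F) ^ (i * k)) • psiDelta h1 h2 w z).val.2
    rw [SetLike.val_smul, Prod.smul_snd]
    exact h2.symm i k _ _ hz2 hw2

end Psi

set_option maxHeartbeats 2000000 in
set_option synthInstance.maxHeartbeats 400000 in
/-- Let `R` be a graded `F`-algebra, `ℓ` a linear functional,
`N > 0`, and `ψ` a graded symmetric bilinear map of degree `−2N` satisfying
properties (1), (2), (3). If two `d`-dimensional deformations of `R` each admit
an extension of `ψ`, then so does their sum; hence `Def_d(R, ψ) ⊆ Def_d(R)` is
closed under the sum of deformations. -/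
theorem extension_closed_under_sum
    {F : Type} [Field F] (R : GradedFAlg F) (l : R.carrier →ₗ[F] F) (N : ℕ) (hN : 0 < N)
    (ψ : R.carrier →ₗ[F] R.carrier →ₗ[F] R.carrier)
    (hdeg : ∀ (i j : ℤ) (x y : R.carrier), x ∈ R.grading i → y ∈ R.grading j →
      ψ x y ∈ R.grading (i + j - 2 * (N : ℤ)))
    (hsymm : ∀ (i j : ℤ) (x y : R.carrier), x ∈ R.grading i → y ∈ R.grading j →
      ψ x y = ((-1 : F) ^ (i * j)) • ψ y x)
    (hassoc : ∀ x y z : R.carrier, x * ψ y z - ψ (x * y) z + ψ x (y * z) - ψ x y * z = 0)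
    (hone : ∀ x : R.carrier, ψ 1 x = 0)
    (hdiv : ∀ w : R.carrier, w ∈ R.grading 2 → l w = 0 → ∀ x : R.carrier, ψ w x = 0)
    (d : ℤ) (hd : 0 < d) (D1 D2 D : Deformation F R d)
    (h1 : ∃ ψt1, IsExtensionOf l N ψ D1 ψt1)
    (h2 : ∃ ψt2, IsExtensionOf l N ψ D2 ψt2)
    (hsum : IsSumOf D1 D2 D) :
    ∃ ψt, IsExtensionOf l N ψ D ψt := by
  classical
  obtain ⟨ψt1, h1⟩ := h1
  obtain ⟨ψt2, h2⟩ := h2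
  obtain ⟨π, hπsurj, hπgr, hπt1, hπt2, hπker, hπover⟩ := hsum
  have hTT : sumTT D1 D2 = sumT1 D1 D2 - sumT2 D1 D2 := by
    apply Subtype.ext
    show (D1.t, -D2.t) = ((D1.t, 0) : D1.alg.carrier × D2.alg.carrier) - (0, D2.t)
    simp [Prod.ext_iff]
  have hπTT : π (sumTT D1 D2) = 0 := by rw [hTT, map_sub, hπt1, hπt2, sub_self]
  obtain ⟨σ, hσ0⟩ := LinearMap.exists_rightInverse_of_surjective π.toLinearMap
    (LinearMap.range_eq_top.mpr hπsurj)
  have hσ : ∀ x, π (σ x) = x := fun x => by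
    have h := LinearMap.congr_fun hσ0 x
    rwa [LinearMap.comp_apply, LinearMap.id_apply, AlgHom.toLinearMap_apply] at h
  -- kernel multiples are killed by `π ∘ ψ̃_Δ`
  have hkill : ∀ u w, π (psiDelta h1 h2 (sumTT D1 D2 * u) w) = 0 := by
    intro u w
    rw [psiDelta_tt_mul, map_mul, hπTT, zero_mul]
  have hkill2 : ∀ z v, π (psiDelta h1 h2 z (sumTT D1 D2 * v)) = 0 := by
    intro z v
    obtain ⟨S1, hS1⟩ := exists_piece_sum z
    obtain ⟨S2, hS2⟩ := exists_piece_sum v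
    have hterm : ∀ (a b : ℤ),
        π (psiDelta h1 h2 (deltaPiece z a) (sumTT D1 D2 * deltaPiece v b)) = 0 := by
      intro a b
      have hm1 : (sumTT D1 D2 * deltaPiece v b).val.1 ∈ D1.alg.grading (d + b) := by
        show D1.t * (deltaPiece v b).val.1 ∈ _
        exact SetLike.mul_mem_graded D1.t_mem (deltaPiece_mem_fst v b)
      have hm2 : (sumTT D1 D2 * deltaPiece v b).val.2 ∈ D2.alg.grading (d + b) := by
        show (-D2.t) * (deltaPiece v b).val.2 ∈ _
        exact SetLike.mul_mem_graded (neg_mem D2.t_mem) (deltaPiece_mem_snd v b)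
      rw [psiDelta_symm h1 h2 (deltaPiece z a) (sumTT D1 D2 * deltaPiece v b)
        (deltaPiece_mem_fst z a) (deltaPiece_mem_snd z a) hm1 hm2, map_smul, hkill, smul_zero]
    rw [← hS1, ← hS2, Finset.mul_sum]
    simp only [map_sum, LinearMap.sum_apply]
    exact Finset.sum_eq_zero fun i _ => Finset.sum_eq_zero fun k _ => hterm _ _
  -- independence of the chosen preimages
  have hπψ : ∀ z w, π (psiDelta h1 h2 z w) = π (psiDelta h1 h2 (σ (π z)) (σ (π w))) := by
    intro z w
    obtain ⟨u, hu⟩ := (hπker (z - σ (π z))).mp (by rw [map_sub, hσ, sub_self])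
    obtain ⟨v, hv⟩ := (hπker (w - σ (π w))).mp (by rw [map_sub, hσ, sub_self])
    have hz' : z = σ (π z) + sumTT D1 D2 * u := by rw [← hu]; abel
    have hw' : w = σ (π w) + sumTT D1 D2 * v := by rw [← hv]; abel
    have eA : psiDelta h1 h2 (σ (π z) + sumTT D1 D2 * u)
        = psiDelta h1 h2 (σ (π z)) + psiDelta h1 h2 (sumTT D1 D2 * u) :=
      map_add (psiDelta h1 h2) (σ (π z)) (sumTT D1 D2 * u)
    conv_lhs => rw [hz', hw']
    rw [eA, LinearMap.add_apply,
      map_add (psiDelta h1 h2 (σ (π z))) (σ (π w)) (sumTT D1 D2 * v),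
      map_add π, map_add π, hkill, hkill2, add_zero, add_zero]
  -- the homogeneous lifting lemma
  have hlift : ∀ (i : ℤ) (x : D.alg.carrier), x ∈ D.alg.grading i →
      ∃ z : ↥(sumSubalg D1 D2), z.val.1 ∈ D1.alg.grading i ∧ z.val.2 ∈ D2.alg.grading i ∧
        π z = x := by
    intro i x hx
    obtain ⟨z0, hz0⟩ := hπsurj x
    obtain ⟨S, hSsum⟩ := exists_piece_sum z0
    have hxsum : x = ∑ k ∈ S, π (deltaPiece z0 k) := by rw [← map_sum, hSsum, hz0]
    have hterm : ∀ k ∈ S, π (deltaPiece z0 k) ∈ D.alg.grading k := fun k _ =>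
      hπgr k _ (deltaPiece_mem_fst _ _) (deltaPiece_mem_snd _ _)
    by_cases hi : i ∈ S
    · refine ⟨deltaPiece z0 i, deltaPiece_mem_fst _ _, deltaPiece_mem_snd _ _, ?_⟩
      have h2' : gproj D.alg i x = π (deltaPiece z0 i) := by
        rw [hxsum, map_sum,
          Finset.sum_eq_single_of_mem i hi (fun k hk hki => gproj_of_mem_ne D.alg (hterm k hk) hki)]
        exact gproj_of_mem_same D.alg (hterm i hi)
      rw [← h2', gproj_of_mem_same D.alg hx]
    · refine ⟨0, ?_, ?_, ?_⟩
      · show (0 : D1.alg.carrier) ∈ _; exact zero_mem _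
      · show (0 : D2.alg.carrier) ∈ _; exact zero_mem _
      · rw [map_zero]
        have hx0 : x = 0 := by
          calc x = gproj D.alg i x := (gproj_of_mem_same D.alg hx).symm
          _ = ∑ k ∈ S, gproj D.alg i (π (deltaPiece z0 k)) := by rw [hxsum, map_sum]
          _ = 0 := Finset.sum_eq_zero fun k hk =>
            gproj_of_mem_ne D.alg (hterm k hk) (fun h => hi (h ▸ hk))
        rw [hx0]
  -- the extension on `D`
  refine ⟨LinearMap.mk₂ F (fun x y => π (psiDelta h1 h2 (σ x) (σ y)))
    (fun x x' y => by simp only [map_add, LinearMap.add_apply])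
    (fun c x y => by simp only [map_smul, LinearMap.smul_apply])
    (fun x y y' => by simp only [map_add])
    (fun c x y => by simp only [map_smul]), ?_, ?_, ?_, ?_, ?_, ?_, ?_⟩
  · -- deg
    intro i k x y hx hy
    obtain ⟨z, hz1, hz2, hzπ⟩ := hlift i x hx
    obtain ⟨w, hw1, hw2, hwπ⟩ := hlift k y hy
    have hh := hπψ z w
    rw [hzπ, hwπ] at hh
    rw [LinearMap.mk₂_apply, ← hh]
    exact hπgr _ _ (h1.deg i k _ _ hz1 hw1) (h2.deg i k _ _ hz2 hw2)
  · -- symm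
    intro i k x y hx hy
    obtain ⟨z, hz1, hz2, hzπ⟩ := hlift i x hx
    obtain ⟨w, hw1, hw2, hwπ⟩ := hlift k y hy
    have hh := hπψ z w
    rw [hzπ, hwπ] at hh
    have hh' := hπψ w z
    rw [hzπ, hwπ] at hh'
    rw [LinearMap.mk₂_apply, LinearMap.mk₂_apply, ← hh, ← hh',
      psiDelta_symm h1 h2 z w hz1 hz2 hw1 hw2, map_smul]
  · -- assoc
    intro x y z
    have hbig : σ x * psiDelta h1 h2 (σ y) (σ z) - psiDelta h1 h2 (σ x * σ y) (σ z)
        + psiDelta h1 h2 (σ x) (σ y * σ z) - psiDelta h1 h2 (σ x) (σ y) * σ z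
        = (0 : ↥(sumSubalg D1 D2)) := by
      apply Subtype.ext
      apply Prod.ext
      · exact h1.assoc (σ x).val.1 (σ y).val.1 (σ z).val.1
      · exact h2.assoc (σ x).val.2 (σ y).val.2 (σ z).val.2
    have e1 : x * (π (psiDelta h1 h2 (σ y) (σ z)))
        = π (σ x * psiDelta h1 h2 (σ y) (σ z)) := by rw [map_mul, hσ]
    have e2 := hπψ (σ x * σ y) (σ z)
    rw [map_mul π (σ x) (σ y), hσ, hσ, hσ] at e2
    have e3 := hπψ (σ x) (σ y * σ z)
    rw [map_mul π (σ y) (σ z), hσ, hσ, hσ] at e3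
    have e4 : (π (psiDelta h1 h2 (σ x) (σ y))) * z
        = π (psiDelta h1 h2 (σ x) (σ y) * σ z) := by rw [map_mul, hσ]
    simp only [LinearMap.mk₂_apply]
    rw [e1, ← e2, ← e3, e4, ← map_sub, ← map_add, ← map_sub, hbig, map_zero]
  · -- one
    intro x
    have h0 : psiDelta h1 h2 1 (σ x) = 0 := by
      apply Subtype.ext
      apply Prod.ext
      · exact h1.one _
      · exact h2.one _
    have hh := hπψ 1 (σ x)
    rw [map_one π, hσ] at hh
    rw [LinearMap.mk₂_apply, ← hh, h0, map_zero]
  · -- t_zero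
    intro x
    have h0 : psiDelta h1 h2 (sumT1 D1 D2) (σ x) = 0 := by
      apply Subtype.ext
      apply Prod.ext
      · exact h1.t_zero _
      · show ψt2 (0 : D2.alg.carrier) (σ x).val.2 = (0 : ↥(sumSubalg D1 D2)).val.2
        rw [map_zero, LinearMap.zero_apply]
        rfl
    have hh := hπψ (sumT1 D1 D2) (σ x)
    rw [hπt1, hσ] at hh
    rw [LinearMap.mk₂_apply, ← hh, h0, map_zero]
  · -- div
    intro w hw hl x
    obtain ⟨z, hz1, hz2, hzπ⟩ := hlift 2 w hw
    have hl1 : l (D1.j.toAlgHom z.val.1) = 0 := by rw [← hπover z, hzπ]; exact hl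
    have hl2 : l (D2.j.toAlgHom z.val.2) = 0 := by rw [← sumSubalg_prop z]; exact hl1
    have h0 : psiDelta h1 h2 z (σ x) = 0 := by
      apply Subtype.ext
      apply Prod.ext
      · exact h1.div _ hz1 hl1 _
      · exact h2.div _ hz2 hl2 _
    have hh := hπψ z (σ x)
    rw [hzπ, hσ] at hh
    rw [LinearMap.mk₂_apply, ← hh, h0, map_zero]
  · -- compat
    intro x y
    have hjx : ∀ x, D.j.toAlgHom x = D1.j.toAlgHom (σ x).val.1 := by
      intro x
      conv_lhs => rw [← hσ x]
      rw [hπover]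
    have hc : (psiDelta h1 h2 (σ x) (σ y)).val.1 = ψt1 (σ x).val.1 (σ y).val.1 := rfl
    rw [LinearMap.mk₂_apply, hπover, hc, h1.compat, hjx x, hjx y]
end
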